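/- Any Tychonoff product of a family of H(i) spaces is H(i). -/

import Mathlib

open Cardinal Set Filter

universe u v

/-- `x` is a `D`-limit point of the family of sets `O`. -/
def DLimitSets {X : Type u} {I : Type v} [TopologicalSpace X]
    (D : Ultrafilter I) (O : I → Set X) (x : X) : Prop :=
  ∀ U ∈ nhds x, {i | (U ∩ O i).Nonempty} ∈ D

/-- `X` is `D`-pseudocompact. -/
def DPseudocompact (X : Type u) {I : Type v} [TopologicalSpace X]
    (D : Ultrafilter I) : Prop :=
  ∀ O : I → Set X, (∀ i, IsOpen (O i)) → (∀ i, (O i).Nonempty) →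
    ∃ x : X, DLimitSets D O x

/-- Every open cover of cardinality at most `lam` has a finite subfamily with dense union. -/
def WeaklyInitiallyCompact (X : Type u) [TopologicalSpace X] (lam : Cardinal.{u}) : Prop :=
  ∀ 𝒰 : Set (Set X), (∀ U ∈ 𝒰, IsOpen U) → ⋃₀ 𝒰 = Set.univ →
    Cardinal.mk 𝒰 ≤ lam →
    ∃ t : Finset (Set X), ↑t ⊆ 𝒰 ∧ Dense (⋃₀ (t : Set (Set X)))

/-- A regular ultrafilter over `I` (regular of degree `|I|`): there is an `I`-indexed
family of members of `D` every infinite subfamily of which has empty intersection. -/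
def RegularUltrafilter {I : Type v} (D : Ultrafilter I) : Prop :=
  ∃ Z : I → Set I, (∀ i, Z i ∈ D) ∧
    ∀ S : Set I, S.Infinite → ⋂ i ∈ S, Z i = ∅

/-- A space is H(i) if every open cover has a finite subfamily with dense union. -/
def HI (X : Type u) [TopologicalSpace X] : Prop :=
  ∀ 𝒰 : Set (Set X), (∀ U ∈ 𝒰, IsOpen U) → ⋃₀ 𝒰 = Set.univ →
    ∃ t : Finset (Set X), ↑t ⊆ 𝒰 ∧ Dense (⋃₀ (t : Set (Set X)))

def ThetaCluster {Y : Type u} [TopologicalSpace Y] (F : Ultrafilter Y) (x : Y) : Prop :=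
  ∀ U : Set Y, IsOpen U → x ∈ U → closure U ∈ F

section Aux

variable {Y : Type u} [TopologicalSpace Y]

lemma hi_theta (h : HI Y) (F : Ultrafilter Y) : ∃ x, ThetaCluster F x := by
  by_contra hc
  simp only [not_exists, ThetaCluster, not_forall] at hc
  set 𝒰 : Set (Set Y) := {U | IsOpen U ∧ (closure U)ᶜ ∈ F} with h𝒰
  have hcov : ⋃₀ 𝒰 = Set.univ := by
    ext x
    simp only [mem_sUnion, mem_univ, iff_true]
    obtain ⟨U, hUo, hxU, hcl⟩ := hc x
    exact ⟨U, ⟨hUo, (F.mem_or_compl_mem (closure U)).resolve_left hcl⟩, hxU⟩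
  obtain ⟨t, hts, htd⟩ := h 𝒰 (fun U hU => hU.1) hcov
  have h1 : closure (⋃₀ (t : Set (Set Y))) = Set.univ := htd.closure_eq
  rw [t.finite_toSet.closure_sUnion] at h1
  have h2 : (⋂ U ∈ (t : Set (Set Y)), (closure U)ᶜ) ∈ F :=
    (Filter.biInter_mem t.finite_toSet).2 fun U hU => (hts hU).2
  rw [← compl_iUnion₂, h1, compl_univ] at h2
  exact F.toFilter.empty_notMem h2

lemma theta_hi (h : ∀ F : Ultrafilter Y, ∃ x, ThetaCluster F x) : HI Y := by
  classical
  intro 𝒰 hop hcov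
  by_contra hc
  push_neg at hc
  set S : Set (Set Y) := (fun U => (closure U)ᶜ) '' 𝒰 with hS
  have hch : ∀ s : Set Y, ∃ U : Set Y, s ∈ S → U ∈ 𝒰 ∧ (closure U)ᶜ = s := by
    intro s
    by_cases hs : s ∈ S
    · obtain ⟨U, hU, hUs⟩ := hs
      exact ⟨U, fun _ => ⟨hU, hUs⟩⟩
    · exact ⟨∅, fun hmem => absurd hmem hs⟩
  choose g hg using hch
  have hne : Filter.NeBot (Filter.generate S) := by
    rw [Filter.generate_neBot_iff]
    intro t hts htf
    by_contra hemp
    rw [Set.not_nonempty_iff_eq_empty] at hemp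
    set t' : Finset (Set Y) := htf.toFinset.image g with ht'
    refine hc t' ?_ ?_
    · intro U hU
      simp only [ht', Finset.coe_image, Set.mem_image, Finite.coe_toFinset] at hU
      obtain ⟨s, hs, rfl⟩ := hU
      exact (hg s (hts hs)).1
    · rw [dense_iff_closure_eq]
      ext x
      simp only [mem_univ, iff_true]
      have hx : x ∉ ⋂₀ t := by rw [hemp]; exact notMem_empty x
      obtain ⟨s, hst, hxs⟩ := by simpa [mem_sInter] using hx
      have hgs := hg s (hts hst)
      have hx2 : x ∈ closure (g s) := by
        by_contra hx3
        exact hxs (hgs.2 ▸ hx3)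
      refine closure_mono ?_ hx2
      exact subset_sUnion_of_mem (by
        simp only [ht', Finset.coe_image, Finite.coe_toFinset]
        exact Set.mem_image_of_mem g hst)
  let F : Ultrafilter Y := @Ultrafilter.of _ (Filter.generate S) hne
  obtain ⟨x, hx⟩ := h F
  have hxU : x ∈ ⋃₀ 𝒰 := hcov ▸ mem_univ x
  obtain ⟨U₀, hU₀, hxU₀⟩ := hxU
  have h1 : closure U₀ ∈ F := hx U₀ (hop U₀ hU₀) hxU₀
  have h2 : (closure U₀)ᶜ ∈ F :=
    (@Ultrafilter.of_le _ (Filter.generate S) hne)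
      (Filter.mem_generate_of_mem (Set.mem_image_of_mem _ hU₀))
  have := Filter.inter_mem h1 h2
  rw [Set.inter_compl_self] at this
  exact F.toFilter.empty_notMem this

end Aux

theorem product_HI {J : Type u} {X : J → Type u} [∀ j, TopologicalSpace (X j)]
    (hX : ∀ j, HI (X j)) : HI (∀ j, X j) := by
  apply theta_hi
  intro F
  have hcl : ∀ j, ∃ x, ThetaCluster (F.map (Function.eval j)) x :=
    fun j => hi_theta (hX j) _
  choose x hx using hcl
  refine ⟨x, ?_⟩
  intro U hU hxU
  obtain ⟨t, V, hV, hVU⟩ := isOpen_pi_iff.1 hU x hxU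
  have hmem : (↑t : Set J).pi (fun j => closure (V j)) ∈ F := by
    rw [Set.pi_def]
    refine (Filter.biInter_mem t.finite_toSet).2 fun j hj => ?_
    exact Ultrafilter.mem_map.1 (hx j (V j) (hV j hj).1 (hV j hj).2)
  refine Filter.mem_of_superset hmem ?_
  calc (↑t : Set J).pi (fun j => closure (V j)) = closure ((↑t : Set J).pi V) := by
        rw [closure_pi_set]
    _ ⊆ closure U := closure_mono hVU
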